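/- For every complex number z with |z| < 1 (z ≠ 0), Re(√(2/z)·sinh(√(z/2))) ≥ 5/7 and Re(√(z/2)·csch(√(z/2))) ≥ 7/9, where the functions are interpreted via their (single-valued) power series: √(2/z)·sinh(√(z/2)) = Σ_{k=0}^∞ (z/2)^k/(2k+1)! and its reciprocal accordingly. -/

import Mathlib

noncomputable def sinhSeries (z : ℂ) : ℂ := ∑' k : ℕ, (z / 2) ^ k / (Nat.factorial (2 * k + 1) : ℂ)

lemma fact_ge20 (k : ℕ) : (6:ℝ) * 20 ^ k ≤ (Nat.factorial (2 * (k + 1) + 1) : ℝ) := by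
  induction k with
  | zero => norm_num [Nat.factorial]
  | succ n ih =>
      have h : 2 * (n + 2) + 1 = (2 * (n + 1) + 1) + 2 := by ring
      have hfac : (Nat.factorial (2 * (n + 2) + 1) : ℝ)
          = ((2 * (n + 1) + 1 : ℕ) + 2) * (((2 * (n + 1) + 1 : ℕ) + 1)
            * (Nat.factorial (2 * (n + 1) + 1) : ℝ)) := by
        rw [h]
        push_cast [Nat.factorial_succ]
        ring
      rw [hfac]
      have hfpos : (0:ℝ) ≤ (Nat.factorial (2 * (n + 1) + 1) : ℝ) := by positivity
      have h3 : (3:ℝ) ≤ ((2 * (n + 1) + 1 : ℕ) : ℝ) := by push_cast; linarith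
      have h20 : (20:ℝ) * (Nat.factorial (2 * (n + 1) + 1) : ℝ)
          ≤ (((2 * (n + 1) + 1 : ℕ) : ℝ) + 2) * ((((2 * (n + 1) + 1 : ℕ) : ℝ) + 1)
            * (Nat.factorial (2 * (n + 1) + 1) : ℝ)) := by
        have hcc : (20:ℝ) ≤ (((2 * (n + 1) + 1 : ℕ) : ℝ) + 2) * (((2 * (n + 1) + 1 : ℕ) : ℝ) + 1) := by
          nlinarith [h3]
        nlinarith [mul_le_mul_of_nonneg_right hcc hfpos]
      have : (6:ℝ) * 20 ^ (n + 1) = 20 * (6 * 20 ^ n) := by ring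
      linarith

theorem sinh_re_bounds (z : ℂ) (hz : ‖z‖ < 1) (hz0 : z ≠ 0) :
    5 / 7 ≤ (sinhSeries z).re ∧ 7 / 9 ≤ (1 / sinhSeries z).re := by
  set f : ℕ → ℂ := fun k => (z / 2) ^ k / (Nat.factorial (2 * k + 1) : ℂ) with hf
  have hz2 : ‖z / 2‖ ≤ 1 / 2 := by
    rw [norm_div]
    norm_num
    linarith [hz]
  have hnormk : ∀ k, ‖f k‖ ≤ (1/2) ^ k := by
    intro k
    have h1 : ‖f k‖ = ‖z / 2‖ ^ k / (Nat.factorial (2 * k + 1) : ℝ) := by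
      simp [hf, map_div₀, map_pow, Complex.norm_natCast]
    rw [h1]
    have hfac1 : (1:ℝ) ≤ (Nat.factorial (2 * k + 1) : ℝ) := by
      exact_mod_cast Nat.one_le_iff_ne_zero.mpr (Nat.factorial_ne_zero _)
    calc ‖z / 2‖ ^ k / (Nat.factorial (2 * k + 1) : ℝ)
        ≤ ‖z / 2‖ ^ k := div_le_self (by positivity) hfac1
      _ ≤ (1/2) ^ k := pow_le_pow_left₀ (norm_nonneg _) hz2 k
  have hsum : Summable f := by
    apply Summable.of_norm
    apply Summable.of_nonneg_of_le (fun k => norm_nonneg _) hnormk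
    exact summable_geometric_of_lt_one (by norm_num) (by norm_num)
  have hg : Summable (fun k : ℕ => (1/12 : ℝ) * (1/40) ^ k) :=
    (summable_geometric_of_lt_one (by norm_num) (by norm_num)).mul_left _
  have hnormtail : ∀ k, ‖f (k + 1)‖ ≤ (1/12 : ℝ) * (1/40) ^ k := by
    intro k
    have h1 : ‖f (k + 1)‖ = ‖z / 2‖ ^ (k + 1) / (Nat.factorial (2 * (k + 1) + 1) : ℝ) := by
      simp [hf, map_div₀, map_pow, Complex.norm_natCast]
    rw [h1]
    have hfl := fact_ge20 k
    have hfp : (0:ℝ) < 6 * 20 ^ k := by positivity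
    have hnum : ‖z / 2‖ ^ (k + 1) ≤ (1/2) ^ (k + 1) :=
      pow_le_pow_left₀ (norm_nonneg _) hz2 _
    calc ‖z / 2‖ ^ (k + 1) / (Nat.factorial (2 * (k + 1) + 1) : ℝ)
        ≤ (1/2) ^ (k + 1) / (6 * 20 ^ k) := by
          apply div_le_div₀ (by positivity) hnum hfp hfl
      _ = (1/12 : ℝ) * (1/40) ^ k := by
          rw [pow_succ]
          field_simp
          have h40 : (1/40:ℝ) ^ k = (1/2) ^ k * (1/20) ^ k := by rw [← mul_pow]; norm_num
          have h20 : (20:ℝ) ^ k * (1/20) ^ k = 1 := by rw [← mul_pow]; norm_num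
          linear_combination (-12 * (20:ℝ) ^ k) * h40 + (-12 * (1/2:ℝ) ^ k) * h20
  have hsumtail : Summable fun k => ‖f (k + 1)‖ := by
    apply Summable.of_nonneg_of_le (fun k => norm_nonneg _) hnormtail hg
  have hsumtailC : Summable fun k => f (k + 1) := hsumtail.of_norm
  have hgval : ∑' k : ℕ, (1/12 : ℝ) * (1/40) ^ k = 10 / 117 := by
    rw [tsum_mul_left, tsum_geometric_of_lt_one (by norm_num) (by norm_num)]
    norm_num
  have htail : ‖∑' k, f (k + 1)‖ ≤ 10 / 117 := by
    calc ‖∑' k, f (k + 1)‖ ≤ ∑' k, ‖f (k + 1)‖ := norm_tsum_le_tsum_norm hsumtail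
      _ ≤ ∑' k : ℕ, (1/12 : ℝ) * (1/40) ^ k := Summable.tsum_le_tsum hnormtail hsumtail hg
      _ = 10 / 117 := hgval
  have hf0 : f 0 = 1 := by simp [hf, Nat.factorial]
  have hsplit : sinhSeries z = 1 + ∑' k, f (k + 1) := by
    rw [sinhSeries, ← hf0]
    exact Summable.tsum_eq_zero_add hsum
  set t : ℂ := ∑' k, f (k + 1) with ht
  have htre : |t.re| ≤ 10 / 117 := (Complex.abs_re_le_norm t).trans htail
  constructor
  · rw [hsplit]
    simp only [Complex.add_re, Complex.one_re]
    have := abs_le.mp htre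
    linarith [this.1]
  · have hns : (107 : ℝ) / 117 ≤ ‖sinhSeries z‖ := by
      rw [hsplit]
      have h1 := norm_sub_norm_le (1:ℂ) (-t)
      simp only [sub_neg_eq_add, norm_neg, norm_one] at h1
      linarith
    have hsne : sinhSeries z ≠ 0 := by
      intro h
      rw [h] at hns
      simp at hns
      linarith
    have hinv : 1 / sinhSeries z - 1 = -t / sinhSeries z := by
      field_simp [hsne]
      rw [hsplit]; ring
    have hinvnorm : ‖1 / sinhSeries z - 1‖ ≤ 10 / 107 := by
      rw [hinv, norm_div, norm_neg]
      calc ‖t‖ / ‖sinhSeries z‖ ≤ (10/117) / (107/117) := by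
            apply div_le_div₀ (by norm_num) htail (by norm_num) hns
        _ = 10 / 107 := by norm_num
    have hre : |(1 / sinhSeries z - 1).re| ≤ 10 / 107 :=
      (Complex.abs_re_le_norm _).trans hinvnorm
    have h2 := (abs_le.mp hre).1
    simp only [Complex.sub_re, Complex.one_re] at h2
    linarith
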